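/- Every r-uniform hypergraph with chromatic number greater than t contains a copy of every r-uniform hypertree with t edges. -/

import Mathlib

open Finset

structure FinHypergraph (V : Type*) where
  edges : Finset (Finset V)

namespace FinHypergraph

variable {V : Type*} [DecidableEq V]

/-- `H` is `r`-uniform: every edge has exactly `r` vertices. -/
def Uniform (H : FinHypergraph V) (r : ℕ) : Prop := ∀ e ∈ H.edges, e.card = r

/-- Two vertices are adjacent if some edge contains both. -/
def adj (H : FinHypergraph V) (u w : V) : Prop := ∃ e ∈ H.edges, u ∈ e ∧ w ∈ e

/-- `H` is connected: any two vertices are joined by a walk. -/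
def Connected (H : FinHypergraph V) : Prop := ∀ u w : V, Relation.ReflTransGen H.adj u w

/-- No two distinct edges intersect in more than one vertex. -/
def Linear (H : FinHypergraph V) : Prop :=
  ∀ e ∈ H.edges, ∀ f ∈ H.edges, e ≠ f → (e ∩ f).card ≤ 1

/-- A Berge cycle: distinct vertices `v 0, …, v (k-1)` and distinct edges
`e 0, …, e (k-1)`, `k ≥ 2`, with `{v i, v (i+1)} ⊆ e i` cyclically. -/
def HasBergeCycle (H : FinHypergraph V) : Prop :=
  ∃ k : ℕ, ∃ _ : 2 ≤ k, ∃ (v : Fin k → V) (e : Fin k → Finset V),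
    Function.Injective v ∧ Function.Injective e ∧
    (∀ i, e i ∈ H.edges) ∧
    (∀ i : Fin k, v i ∈ e i ∧ v ⟨(i.val + 1) % k, Nat.mod_lt _ (by omega)⟩ ∈ e i)

/-- A hypertree: connected, linear, with no Berge cycle. -/
def IsHypertree (H : FinHypergraph V) : Prop :=
  H.Connected ∧ H.Linear ∧ ¬ H.HasBergeCycle

/-- A proper coloring: no edge is monochromatic. -/
def Proper (H : FinHypergraph V) {k : ℕ} (c : V → Fin k) : Prop :=
  ∀ e ∈ H.edges, ¬ ∀ u ∈ e, ∀ w ∈ e, c u = c w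

/-- The chromatic number: least number of colors in a proper coloring. -/
noncomputable def chromaticNumber (H : FinHypergraph V) : ℕ :=
  sInf {k | ∃ c : V → Fin k, H.Proper c}

/-- `H` contains a copy of `T`: an injective vertex map sending edges to edges. -/
def ContainsCopy {W : Type*} [DecidableEq W] (H : FinHypergraph V) (T : FinHypergraph W) : Prop :=
  ∃ φ : W → V, Function.Injective φ ∧ ∀ e ∈ T.edges, e.image φ ∈ H.edges

end FinHypergraph

/-- The complete `r`-uniform hypergraph on `Fin n`. -/
def completeHypergraph (n r : ℕ) : FinHypergraph (Fin n) :=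
  ⟨Finset.univ.powersetCard r⟩

section AuxColoring
variable {V : Type*} [Fintype V] [DecidableEq V]

lemma exists_good_coloring (r t : ℕ) (hr : 2 ≤ r) (H : FinHypergraph V) (hH : H.Uniform r)
    (hnp : ¬ ∃ c : V → Fin t, H.Proper c) :
    ∃ γ : V → ℕ,
      (∀ z : V, ∀ α, α < γ z → ∃ e ∈ H.edges, z ∈ e ∧ ∀ y ∈ e, y ≠ z → γ y = α) ∧
      (∃ v, t ≤ γ v) := by
  classical
  set S : Set ℕ :=
    {s | ∃ γ : V → ℕ, (∀ e ∈ H.edges, ∃ u ∈ e, ∃ w ∈ e, γ u ≠ γ w) ∧ ∑ x, γ x = s} with hS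
  have hSne : S.Nonempty := by
    refine ⟨_, fun x => (Fintype.equivFin V x).val, fun e he => ?_, rfl⟩
    have hc : 1 < e.card := by rw [hH e he]; omega
    obtain ⟨a, ha, b, hb, hab⟩ := Finset.one_lt_card.mp hc
    exact ⟨a, ha, b, hb, fun hcon =>
      hab ((Fintype.equivFin V).injective (Fin.ext hcon))⟩
  obtain ⟨γ, hγP, hγsum⟩ : sInf S ∈ S := Nat.sInf_mem hSne
  refine ⟨γ, ?_, ?_⟩
  · intro z α hα
    by_contra hno
    push_neg at hno
    have hP' : ∀ e ∈ H.edges, ∃ u ∈ e, ∃ w ∈ e,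
        Function.update γ z α u ≠ Function.update γ z α w := by
      intro e he
      by_cases hz : z ∈ e
      · obtain ⟨y, hy, hyz, hyα⟩ := hno e he hz
        refine ⟨y, hy, z, hz, ?_⟩
        rw [Function.update_of_ne hyz, Function.update_self]
        exact hyα
      · obtain ⟨u, hu, w, hw, huw⟩ := hγP e he
        refine ⟨u, hu, w, hw, ?_⟩
        rw [Function.update_of_ne (by rintro rfl; exact hz hu),
          Function.update_of_ne (by rintro rfl; exact hz hw)]
        exact huw
    have hsum' : ∑ x, Function.update γ z α x < ∑ x, γ x := by
      rw [Finset.sum_update_of_mem (Finset.mem_univ z)]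
      have h2 : γ z + ∑ x ∈ Finset.univ.erase z, γ x = ∑ x, γ x :=
        Finset.add_sum_erase _ _ (Finset.mem_univ z)
      have h3 : Finset.univ \ {z} = Finset.univ.erase z := by
        ext u; simp [Finset.mem_erase, and_comm]
      rw [h3]
      omega
    have hmem : ∑ x, Function.update γ z α x ∈ S := ⟨_, hP', rfl⟩
    have := Nat.sInf_le hmem
    omega
  · by_contra hnov
    push_neg at hnov
    refine hnp ⟨fun x => ⟨γ x, hnov x⟩, fun e he hmono => ?_⟩
    obtain ⟨u, hu, w, hw, huw⟩ := hγP e he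
    exact huw (by simpa [Fin.ext_iff] using hmono u hu w hw)

end AuxColoring

section Walks
variable {W : Type*} [DecidableEq W]

def WalkOn (C : Finset (Finset W)) (x y : W) (n : ℕ) (v : ℕ → W) (h : ℕ → Finset W) : Prop :=
  v 0 = x ∧ v n = y ∧ ∀ k < n, h k ∈ C ∧ v k ∈ h k ∧ v (k+1) ∈ h k

lemma walkOn_of_rtg (C : Finset (Finset W)) (x y : W)
    (hxy : Relation.ReflTransGen (fun a b => ∃ e ∈ C, a ∈ e ∧ b ∈ e) x y) :
    ∃ n v h, WalkOn C x y n v h := by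
  induction hxy with
  | refl => exact ⟨0, fun _ => x, fun _ => ∅, rfl, rfl, by omega⟩
  | @tail b c hxb hbc ih =>
    obtain ⟨n, v, h, h0, hn, hk⟩ := ih
    obtain ⟨e, he, hbe, hce⟩ := hbc
    refine ⟨n+1, fun k => if k ≤ n then v k else c, fun k => if k < n then h k else e,
      by simp [h0], by simp, ?_⟩
    intro k hk'
    rcases Nat.lt_or_ge k n with hlt | hge
    · have h1 : k ≤ n := hlt.le
      have h2 : k + 1 ≤ n := hlt
      obtain ⟨a1, a2, a3⟩ := hk k hlt
      simp only [if_pos hlt, if_pos h1, if_pos h2]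
      exact ⟨a1, a2, a3⟩
    · have hkn : k = n := by omega
      simp only [if_neg (by omega : ¬ k < n), if_pos (by omega : k ≤ n),
        if_neg (by omega : ¬ k + 1 ≤ n)]
      refine ⟨he, ?_, hce⟩
      rw [hkn, hn]; exact hbe

lemma walkOn_splice (C : Finset (Finset W)) (x y : W) (n : ℕ) (v : ℕ → W) (h : ℕ → Finset W)
    (hw : WalkOn C x y n v h) (a b : ℕ) (hab : a < b) (hbn : b < n) (hin : v a ∈ h b) :
    ∃ v' h', WalkOn C x y (n - (b - a)) v' h' := by
  obtain ⟨h0, hn, hk⟩ := hw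
  refine ⟨fun k => if k ≤ a then v k else v (k + (b - a)),
    fun k => if k < a then h k else h (k + (b - a)), by simp [h0], ?_, ?_⟩
  · have h1 : ¬ n - (b - a) ≤ a := by omega
    have h2 : n - (b - a) + (b - a) = n := by omega
    simp only [if_neg h1, h2, hn]
  · intro k hk'
    rcases Nat.lt_or_ge k a with hlt | hge
    · obtain ⟨a1, a2, a3⟩ := hk k (by omega)
      simp only [if_pos hlt, if_pos hlt.le, if_pos (by omega : k + 1 ≤ a)]
      exact ⟨a1, a2, a3⟩
    · have hkd : k + (b - a) < n := by omega
      obtain ⟨a1, a2, a3⟩ := hk (k + (b - a)) hkd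
      have h3 : ¬ k + 1 ≤ a := by omega
      have h4 : k + 1 + (b - a) = k + (b - a) + 1 := by omega
      simp only [if_neg (by omega : ¬ k < a), if_neg h3, h4]
      refine ⟨a1, ?_, a3⟩
      rcases Nat.eq_or_lt_of_le hge with heq | hgt
      · have hbb : k + (b - a) = b := by omega
        simp only [if_pos (by omega : k ≤ a), hbb]
        exact heq ▸ hin
      · simp only [if_neg (by omega : ¬ k ≤ a)]
        exact a2

lemma hasBergeCycle_of_attach (T : FinHypergraph W) (C : Finset (Finset W))
    (hCT : ∀ e ∈ C, e ∈ T.edges) (g : Finset W) (hg : g ∈ T.edges) (hgC : g ∉ C)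
    (x y : W) (hx : x ∈ g) (hy : y ∈ g) (hxy : x ≠ y)
    (hconn : Relation.ReflTransGen (fun a b => ∃ e ∈ C, a ∈ e ∧ b ∈ e) x y) :
    T.HasBergeCycle := by
  classical
  have hex : ∃ n, ∃ v h, WalkOn C x y n v h := walkOn_of_rtg C x y hconn
  obtain ⟨v, h, hw⟩ := Nat.find_spec hex
  set n₀ := Nat.find hex with hn₀def
  have hmin : ∀ m, m < n₀ → ¬ ∃ v h, WalkOn C x y m v h := fun m hm => Nat.find_min hex hm
  have hn₀ : 1 ≤ n₀ := by
    rcases Nat.eq_zero_or_pos n₀ with h0 | h1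
    · exfalso; exact hxy (by rw [← hw.1, ← hw.2.1, h0])
    · exact h1
  have hvinj : ∀ a b, a < b → b ≤ n₀ → v a ≠ v b := by
    intro a b hab hbn heq
    rcases Nat.eq_or_lt_of_le hbn with hbe | hblt
    · subst hbe
      exact hmin a hab ⟨v, h, hw.1, heq.symm ▸ hw.2.1, fun k hk => hw.2.2 k (by omega)⟩
    · have hin : v a ∈ h b := heq ▸ (hw.2.2 b hblt).2.1
      obtain ⟨v', h', hw'⟩ := walkOn_splice C x y n₀ v h hw a b hab hblt hin
      exact hmin _ (by omega) ⟨v', h', hw'⟩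
  have hhinj : ∀ a b, a < b → b < n₀ → h a ≠ h b := by
    intro a b hab hbn heq
    have hin : v a ∈ h b := heq ▸ (hw.2.2 a (by omega)).2.1
    obtain ⟨v', h', hw'⟩ := walkOn_splice C x y n₀ v h hw a b hab hbn hin
    exact hmin _ (by omega) ⟨v', h', hw'⟩
  refine ⟨n₀ + 1, by omega, fun i => v i.val, fun i => if i.val < n₀ then h i.val else g,
    ?_, ?_, ?_, ?_⟩
  · intro i j heq
    by_contra hne
    have hne' : i.val ≠ j.val := fun hcon => hne (Fin.ext hcon)
    rcases Nat.lt_or_ge i.val j.val with hlt | hge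
    · exact hvinj i.val j.val hlt (by omega) heq
    · exact hvinj j.val i.val (by omega) (by omega) heq.symm
  · intro i j heq
    have hi := i.isLt
    have hj := j.isLt
    by_cases hi' : i.val < n₀ <;> by_cases hj' : j.val < n₀
    · simp only [if_pos hi', if_pos hj'] at heq
      by_contra hne
      have hne' : i.val ≠ j.val := fun hcon => hne (Fin.ext hcon)
      rcases Nat.lt_or_ge i.val j.val with hlt | hge
      · exact hhinj i.val j.val hlt hj' heq
      · exact hhinj j.val i.val (by omega) hi' heq.symm
    · simp only [if_pos hi', if_neg hj'] at heq
      exact absurd (heq ▸ (hw.2.2 i.val hi').1) hgC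
    · simp only [if_neg hi', if_pos hj'] at heq
      exact absurd (heq ▸ (hw.2.2 j.val hj').1) hgC
    · exact Fin.ext (by omega)
  · intro i
    by_cases hi' : i.val < n₀
    · simp only [if_pos hi']
      exact hCT _ (hw.2.2 i.val hi').1
    · simp only [if_neg hi']
      exact hg
  · intro i
    have hi := i.isLt
    by_cases hi' : i.val < n₀
    · simp only [if_pos hi']
      have hmod : (i.val + 1) % (n₀ + 1) = i.val + 1 := Nat.mod_eq_of_lt (by omega)
      refine ⟨(hw.2.2 i.val hi').2.1, ?_⟩
      show v ((i.val + 1) % (n₀ + 1)) ∈ h i.val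
      rw [hmod]
      exact (hw.2.2 i.val hi').2.2
    · have hival : i.val = n₀ := by omega
      simp only [if_neg hi']
      have hmod : (i.val + 1) % (n₀ + 1) = 0 := by rw [hival]; exact Nat.mod_self _
      refine ⟨?_, ?_⟩
      · rw [hival, hw.2.1]; exact hy
      · show v ((i.val + 1) % (n₀ + 1)) ∈ g
        rw [hmod, hw.1]
        exact hx

end Walks

section TreeEnum
variable {W : Type*} [DecidableEq W]

lemma tree_enum (T : FinHypergraph W) (hT : T.IsHypertree) (r t : ℕ) (hr : 2 ≤ r) (ht : 1 ≤ t)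
    (hu : T.Uniform r) (hte : T.edges.card = t) :
    ∃ (g : ℕ → Finset W) (p : ℕ → W),
      (∀ j < t, g j ∈ T.edges) ∧
      (∀ j k, j < k → k < t → g j ≠ g k) ∧
      (∀ e ∈ T.edges, ∃ j, j < t ∧ g j = e) ∧
      (p 0 ∈ g 0) ∧
      (∀ j, 0 < j → j < t → g j ∩ (Finset.range j).biUnion g = {p j}) := by
  classical
  have key : ∀ i, 1 ≤ i → i ≤ t → ∃ (g : ℕ → Finset W) (p : ℕ → W),
      (∀ j < i, g j ∈ T.edges) ∧
      (∀ j k, j < k → k < i → g j ≠ g k) ∧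
      (p 0 ∈ g 0) ∧
      (∀ j, 0 < j → j < i → g j ∩ (Finset.range j).biUnion g = {p j}) ∧
      (∀ x ∈ (Finset.range i).biUnion g, ∀ y ∈ (Finset.range i).biUnion g,
        Relation.ReflTransGen
          (fun a b => ∃ e ∈ (Finset.range i).image g, a ∈ e ∧ b ∈ e) x y) := by
    intro i
    induction i with
    | zero => intro h; omega
    | succ i ih =>
      intro _ hit
      rcases Nat.eq_zero_or_pos i with hi0 | hipos
      · subst hi0
        obtain ⟨e₀, he₀⟩ : ∃ e, e ∈ T.edges := by
          have : T.edges.Nonempty := Finset.card_pos.mp (by omega)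
          exact this
        obtain ⟨p₀, hp₀⟩ : ∃ x, x ∈ e₀ := by
          have : e₀.Nonempty := Finset.card_pos.mp (by rw [hu e₀ he₀]; omega)
          exact this
        refine ⟨fun _ => e₀, fun _ => p₀, fun j _ => he₀, by omega, hp₀, by omega, ?_⟩
        intro x hx y hy
        simp only [Finset.mem_biUnion, Finset.mem_range] at hx hy
        obtain ⟨_, _, hx⟩ := hx
        obtain ⟨_, _, hy⟩ := hy
        exact Relation.ReflTransGen.single
          ⟨e₀, Finset.mem_image.mpr ⟨0, by simp, rfl⟩, hx, hy⟩
      · obtain ⟨g, p, hgT, hginj, hp0, hatt, hconn⟩ := ih hipos (by omega)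
        set U := (Finset.range i).biUnion g with hUdef
        set C := (Finset.range i).image g with hCdef
        have hCT : ∀ e ∈ C, e ∈ T.edges := by
          intro e he
          obtain ⟨j, hj, rfl⟩ := Finset.mem_image.mp he
          exact hgT j (Finset.mem_range.mp hj)
        have hgsubU : ∀ j < i, g j ⊆ U := by
          intro j hj x hx
          exact Finset.mem_biUnion.mpr ⟨j, Finset.mem_range.mpr hj, hx⟩
        have hUne : U.Nonempty := by
          obtain ⟨x, hx⟩ : (g 0).Nonempty :=
            Finset.card_pos.mp (by rw [hu _ (hgT 0 hipos)]; omega)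
          exact ⟨x, hgsubU 0 hipos hx⟩
        -- find a new edge meeting U
        have hnew : ∃ gn ∈ T.edges, gn ∉ C ∧ (gn ∩ U).Nonempty := by
          by_contra hcon
          push_neg at hcon
          have hnsub : ¬ T.edges ⊆ C := by
            intro hsub
            have h1 := Finset.card_le_card hsub
            have h2 : C.card ≤ i := le_trans Finset.card_image_le (by simp)
            omega
          obtain ⟨gn, hgnT, hgnC⟩ := Finset.not_subset.mp hnsub
          have hdisj : ∀ e ∈ T.edges, e ∉ C → ∀ z ∈ e, z ∉ U := by
            intro e heT heC z hz hzU
            exact Finset.not_nonempty_iff_eq_empty.mpr (hcon e heT heC) ⟨z, Finset.mem_inter.mpr ⟨hz, hzU⟩⟩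
          obtain ⟨u, hu'⟩ : gn.Nonempty :=
            Finset.card_pos.mp (by rw [hu _ hgnT]; omega)
          obtain ⟨w, hw⟩ := hUne
          have hclosed : ∀ z, Relation.ReflTransGen T.adj u z → z ∉ U := by
            intro z hz
            induction hz with
            | refl => exact hdisj gn hgnT hgnC u hu'
            | @tail b c hub hbc ihb =>
              obtain ⟨e, heT, hbe, hce⟩ := hbc
              intro hcU
              by_cases heC : e ∈ C
              · obtain ⟨j, hj, rfl⟩ := Finset.mem_image.mp heC
                exact ihb (hgsubU j (Finset.mem_range.mp hj) hbe)
              · exact hdisj e heT heC c hce hcU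
          exact hclosed w (hT.1 u w) hw
        obtain ⟨gn, hgnT, hgnC, hgnU⟩ := hnew
        -- the intersection is a single vertex
        have hcard1 : (gn ∩ U).card = 1 := by
          have hle : (gn ∩ U).card ≤ 1 := by
            rw [Finset.card_le_one]
            intro a ha b hb
            by_contra hab
            have hrtg := hconn a (Finset.mem_inter.mp ha).2 b (Finset.mem_inter.mp hb).2
            exact hT.2.2 (hasBergeCycle_of_attach T C hCT gn hgnT hgnC a b
              (Finset.mem_inter.mp ha).1 (Finset.mem_inter.mp hb).1 hab hrtg)
          have hge : 1 ≤ (gn ∩ U).card := Finset.card_pos.mpr hgnU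
          omega
        obtain ⟨pn, hpn⟩ := Finset.card_eq_one.mp hcard1
        refine ⟨fun j => if j < i then g j else gn, fun j => if j < i then p j else pn,
          ?_, ?_, ?_, ?_, ?_⟩
        · intro j hj
          by_cases h : j < i
          · simpa [h] using hgT j h
          · simpa [h] using hgnT
        · intro j k hjk hk
          by_cases h : k < i
          · simpa [h, show j < i by omega] using hginj j k hjk h
          · have hgjC : g j ∈ C := Finset.mem_image.mpr ⟨j, Finset.mem_range.mpr (by omega), rfl⟩
            intro hcon
            simp only [if_pos (show j < i by omega), if_neg h] at hcon
            exact hgnC (hcon ▸ hgjC)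
        · simpa [hipos] using hp0
        · intro j hj0 hji
          have hbu : ∀ m ≤ i, (Finset.range m).biUnion (fun k => if k < i then g k else gn)
              = (Finset.range m).biUnion g := by
            intro m hm
            apply Finset.biUnion_congr rfl
            intro k hk
            rw [if_pos (by have := Finset.mem_range.mp hk; omega)]
          by_cases h : j < i
          · simp only [if_pos h, hbu j (by omega)]
            exact hatt j hj0 h
          · have hji' : j = i := by omega
            rw [hji']
            simp only [if_neg (lt_irrefl i), hbu i le_rfl]
            exact hpn
        · intro x hx y hy
          have hbu : (Finset.range i).biUnion (fun k => if k < i then g k else gn)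
              = U := by
            apply Finset.biUnion_congr rfl
            intro k hk
            rw [if_pos (Finset.mem_range.mp hk)]
          have hCsub : ∀ e ∈ C, e ∈ (Finset.range (i+1)).image
              (fun k => if k < i then g k else gn) := by
            intro e he
            obtain ⟨j, hj, rfl⟩ := Finset.mem_image.mp he
            exact Finset.mem_image.mpr ⟨j, Finset.mem_range.mpr (by
              have := Finset.mem_range.mp hj; omega), by
                rw [if_pos (Finset.mem_range.mp hj)]⟩
          have hgnC' : gn ∈ (Finset.range (i+1)).image
              (fun k => if k < i then g k else gn) :=
            Finset.mem_image.mpr ⟨i, Finset.mem_range.mpr (by omega), by rw [if_neg (by omega)]⟩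
          have hmono : ∀ a b, (∃ e ∈ C, a ∈ e ∧ b ∈ e) →
              (∃ e ∈ (Finset.range (i+1)).image (fun k => if k < i then g k else gn),
                a ∈ e ∧ b ∈ e) := by
            rintro a b ⟨e, he, hae, hbe⟩
            exact ⟨e, hCsub e he, hae, hbe⟩
          have hpnU : pn ∈ U := by
            have : pn ∈ gn ∩ U := hpn ▸ Finset.mem_singleton_self pn
            exact (Finset.mem_inter.mp this).2
          have hpngn : pn ∈ gn := by
            have : pn ∈ gn ∩ U := hpn ▸ Finset.mem_singleton_self pn
            exact (Finset.mem_inter.mp this).1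
          have hsplit : ∀ z ∈ (Finset.range (i+1)).biUnion
              (fun k => if k < i then g k else gn), z ∈ U ∨ z ∈ gn := by
            intro z hz
            obtain ⟨j, hj, hzj⟩ := Finset.mem_biUnion.mp hz
            by_cases h : j < i
            · left; rw [if_pos h] at hzj; exact hgsubU j h hzj
            · right; rw [if_neg h] at hzj; exact hzj
          have hto : ∀ z, z ∈ U ∨ z ∈ gn → Relation.ReflTransGen
              (fun a b => ∃ e ∈ (Finset.range (i+1)).image
                (fun k => if k < i then g k else gn), a ∈ e ∧ b ∈ e) pn z := by
            intro z hz
            rcases hz with hzU | hzgn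
            · exact Relation.ReflTransGen.mono hmono _ _ (hconn pn hpnU z hzU)
            · exact Relation.ReflTransGen.single ⟨gn, hgnC', hpngn, hzgn⟩
          have hfrom : ∀ z, z ∈ U ∨ z ∈ gn → Relation.ReflTransGen
              (fun a b => ∃ e ∈ (Finset.range (i+1)).image
                (fun k => if k < i then g k else gn), a ∈ e ∧ b ∈ e) z pn := by
            intro z hz
            rcases hz with hzU | hzgn
            · exact Relation.ReflTransGen.mono hmono _ _ (hconn z hzU pn hpnU)
            · exact Relation.ReflTransGen.single ⟨gn, hgnC', hzgn, hpngn⟩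
          exact Relation.ReflTransGen.trans (hfrom x (hsplit x hx)) (hto y (hsplit y hy))
  obtain ⟨g, p, hgT, hginj, hp0, hatt, _⟩ := key t ht le_rfl
  refine ⟨g, p, hgT, hginj, ?_, hp0, hatt⟩
  -- surjectivity
  have himg : (Finset.range t).image g = T.edges := by
    apply Finset.eq_of_subset_of_card_le
    · intro e he
      obtain ⟨j, hj, rfl⟩ := Finset.mem_image.mp he
      exact hgT j (Finset.mem_range.mp hj)
    · rw [hte, Finset.card_image_of_injOn]
      · simp
      · intro a ha b hb hab
        by_contra hne
        rcases Nat.lt_or_ge a b with h | h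
        · exact hginj a b h (Finset.mem_range.mp hb) hab
        · exact hginj b a (by omega) (Finset.mem_range.mp ha) hab.symm
  intro e he
  rw [← himg] at he
  obtain ⟨j, hj, rfl⟩ := Finset.mem_image.mp he
  exact ⟨j, Finset.mem_range.mp hj, rfl⟩

end TreeEnum

section Embed
variable {V : Type*} [DecidableEq V] {W : Type*} [DecidableEq W]

lemma embed_tree (r t : ℕ) (hr : 2 ≤ r) (ht : 1 ≤ t)
    (H : FinHypergraph V) (hH : H.Uniform r) (γ : V → ℕ)
    (hpet : ∀ z : V, ∀ α, α < γ z → ∃ e ∈ H.edges, z ∈ e ∧ ∀ y ∈ e, y ≠ z → γ y = α)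
    (v : V) (hv : t ≤ γ v)
    (T : FinHypergraph W) (hu : T.Uniform r)
    (g : ℕ → Finset W) (p : ℕ → W)
    (hgT : ∀ j < t, g j ∈ T.edges)
    (hp0 : p 0 ∈ g 0)
    (hatt : ∀ j, 0 < j → j < t → g j ∩ (Finset.range j).biUnion g = {p j}) :
    ∃ φ : W → V,
      (∀ x ∈ (Finset.range t).biUnion g, ∀ y ∈ (Finset.range t).biUnion g,
        φ x = φ y → x = y) ∧
      (∀ j < t, (g j).image φ ∈ H.edges) := by
  classical
  have hUsub : ∀ i, ∀ j < i, g j ⊆ (Finset.range i).biUnion g := by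
    intro i j hj x hx
    exact Finset.mem_biUnion.mpr ⟨j, Finset.mem_range.mpr hj, hx⟩
  have hmin : ∀ i, ∀ x ∈ (Finset.range i).biUnion g,
      ∃ j < i, x ∈ g j ∧ x ∉ (Finset.range j).biUnion g := by
    intro i x hx
    obtain ⟨j, hj, hxj⟩ := Finset.mem_biUnion.mp hx
    have hex : ∃ k, x ∈ g k := ⟨j, hxj⟩
    refine ⟨Nat.find hex, ?_, Nat.find_spec hex, ?_⟩
    · have : Nat.find hex ≤ j := Nat.find_min' hex hxj
      have := Finset.mem_range.mp hj
      omega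
    · intro hcon
      obtain ⟨k, hk, hxk⟩ := Finset.mem_biUnion.mp hcon
      exact Nat.find_min hex (Finset.mem_range.mp hk) hxk
  have key : ∀ i, i ≤ t → ∃ φ : W → V,
      (1 ≤ i → φ (p 0) = v) ∧
      (∀ j < i, ∀ x ∈ g j, x ≠ p 0 → x ∉ (Finset.range j).biUnion g →
        γ (φ x) = t - 1 - j) ∧
      (∀ j < i, (g j).image φ ∈ H.edges) ∧
      (∀ x ∈ (Finset.range i).biUnion g, ∀ y ∈ (Finset.range i).biUnion g,
        φ x = φ y → x = y) := by
    intro i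
    induction i with
    | zero =>
      intro _
      exact ⟨fun _ => v, by omega, by omega, by omega, by simp⟩
    | succ i ih =>
      intro hit
      obtain ⟨φ, hroot, hcolor, hedges, hinj⟩ := ih (by omega)
      -- the color of old images is large
      have hγold : ∀ x ∈ (Finset.range i).biUnion g, t - 1 - i < γ (φ x) := by
        intro x hx
        obtain ⟨j, hj, hxj, hxU⟩ := hmin i x hx
        by_cases hxp : x = p 0
        · subst hxp
          rw [hroot (by omega)]
          omega
        · have := hcolor j hj x hxj hxp hxU
          omega
      by_cases hi0 : i = 0
      · -- first edge
        subst hi0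
        have hα : t - 1 < γ v := by omega
        obtain ⟨e, heH, hve, hey⟩ := hpet v (t - 1) hα
        have hg0 : g 0 ∈ T.edges := hgT 0 (by omega)
        have hcN : (g 0 \ {p 0}).card = (e \ {v}).card := by
          rw [Finset.card_sdiff_of_subset (by simpa using hp0),
            Finset.card_sdiff_of_subset (by simpa using hve), hu _ hg0, hH _ heH]
          simp
        set bij := Finset.equivOfCardEq hcN with hbij
        set φ' : W → V := fun x => if hx : x ∈ g 0 \ {p 0} then (bij ⟨x, hx⟩ : V) else v
          with hφ'
        have hφ'p0 : φ' (p 0) = v := by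
          simp only [hφ']
          rw [dif_neg (by simp : p 0 ∉ g 0 \ {p 0})]
        have hφ'mem : ∀ x (hx : x ∈ g 0 \ {p 0}), φ' x ∈ e \ {v} := by
          intro x hx
          simp only [hφ']
          rw [dif_pos hx]
          exact (bij ⟨x, hx⟩).2
        refine ⟨φ', fun _ => hφ'p0, ?_, ?_, ?_⟩
        · intro j hj x hxg hxp _
          have hj0 : j = 0 := by omega
          subst hj0
          have hx : x ∈ g 0 \ {p 0} := Finset.mem_sdiff.mpr ⟨hxg, by simpa using hxp⟩
          have hm := hφ'mem x hx
          rw [Finset.mem_sdiff, Finset.mem_singleton] at hm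
          exact hey _ hm.1 hm.2
        · intro j hj
          have hj0 : j = 0 := by omega
          subst hj0
          have hsplit : g 0 = insert (p 0) (g 0 \ {p 0}) := by
            rw [Finset.sdiff_singleton_eq_erase, Finset.insert_erase hp0]
          rw [hsplit, Finset.image_insert, hφ'p0]
          have himg : (g 0 \ {p 0}).image φ' = e \ {v} := by
            apply Finset.eq_of_subset_of_card_le
            · intro m hm
              obtain ⟨x, hx, rfl⟩ := Finset.mem_image.mp hm
              exact hφ'mem x hx
            · rw [← hcN, Finset.card_image_of_injOn]
              intro a ha b hb hab
              have ha' : a ∈ g 0 \ {p 0} := ha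
              have hb' : b ∈ g 0 \ {p 0} := hb
              simp only [hφ'] at hab
              rw [dif_pos ha', dif_pos hb'] at hab
              have := bij.injective (Subtype.val_injective hab)
              exact congrArg Subtype.val this
          rw [himg, Finset.sdiff_singleton_eq_erase, Finset.insert_erase hve]
          exact heH
        · intro x hx y hy heq
          simp only [Finset.mem_biUnion, Finset.mem_range] at hx hy
          obtain ⟨jx, hjx, hx⟩ := hx
          obtain ⟨jy, hjy, hy⟩ := hy
          have hjx0 : jx = 0 := by omega
          have hjy0 : jy = 0 := by omega
          subst hjx0
          subst hjy0
          by_cases hxp : x = p 0 <;> by_cases hyp : y = p 0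
          · rw [hxp, hyp]
          · exfalso
            have hy' : y ∈ g 0 \ {p 0} := Finset.mem_sdiff.mpr ⟨hy, by simpa using hyp⟩
            have := hφ'mem y hy'
            rw [hxp, hφ'p0] at heq
            rw [← heq] at this
            simp at this
          · exfalso
            have hx' : x ∈ g 0 \ {p 0} := Finset.mem_sdiff.mpr ⟨hx, by simpa using hxp⟩
            have := hφ'mem x hx'
            rw [hyp, hφ'p0] at heq
            rw [heq] at this
            simp at this
          · have hx' : x ∈ g 0 \ {p 0} := Finset.mem_sdiff.mpr ⟨hx, by simpa using hxp⟩
            have hy' : y ∈ g 0 \ {p 0} := Finset.mem_sdiff.mpr ⟨hy, by simpa using hyp⟩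
            simp only [hφ'] at heq
            rw [dif_pos hx', dif_pos hy'] at heq
            have := bij.injective (Subtype.val_injective heq)
            exact congrArg Subtype.val this
      · -- later edges
        have hipos : 0 < i := by omega
        have hpi := hatt i hipos (by omega)
        have hpig : p i ∈ g i := by
          have : p i ∈ g i ∩ (Finset.range i).biUnion g := hpi ▸ Finset.mem_singleton_self _
          exact (Finset.mem_inter.mp this).1
        have hpiU : p i ∈ (Finset.range i).biUnion g := by
          have : p i ∈ g i ∩ (Finset.range i).biUnion g := hpi ▸ Finset.mem_singleton_self _
          exact (Finset.mem_inter.mp this).2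
        set z := φ (p i) with hz
        have hαz : t - 1 - i < γ z := hγold _ hpiU
        obtain ⟨e, heH, hze, hey⟩ := hpet z (t - 1 - i) hαz
        set N := g i \ (Finset.range i).biUnion g with hN
        have hNeq : N = g i \ {p i} := by
          rw [hN, ← hpi, Finset.sdiff_inter_self_left]
        have hNdisj : ∀ x ∈ (Finset.range i).biUnion g, x ∉ N := by
          intro x hx hcon
          rw [hN, Finset.mem_sdiff] at hcon
          exact hcon.2 hx
        have hgit : g i ∈ T.edges := hgT i (by omega)
        have hcN : N.card = (e \ {z}).card := by
          rw [hNeq, Finset.card_sdiff_of_subset (by simpa using hpig),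
            Finset.card_sdiff_of_subset (by simpa using hze), hu _ hgit, hH _ heH]
          simp
        set bij := Finset.equivOfCardEq hcN with hbij
        set φ' : W → V := fun x => if hx : x ∈ N then (bij ⟨x, hx⟩ : V) else φ x with hφ'
        have hφ'old : ∀ x ∈ (Finset.range i).biUnion g, φ' x = φ x := by
          intro x hx
          simp only [hφ']
          rw [dif_neg (hNdisj x hx)]
        have hφ'mem : ∀ x (hx : x ∈ N), φ' x ∈ e \ {z} := by
          intro x hx
          simp only [hφ']
          rw [dif_pos hx]
          exact (bij ⟨x, hx⟩).2
        have hφ'col : ∀ x (hx : x ∈ N), γ (φ' x) = t - 1 - i := by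
          intro x hx
          have hm := hφ'mem x hx
          rw [Finset.mem_sdiff, Finset.mem_singleton] at hm
          exact hey _ hm.1 hm.2
        have hUsucc : (Finset.range (i+1)).biUnion g = g i ∪ (Finset.range i).biUnion g := by
          rw [Finset.range_add_one, Finset.biUnion_insert]
        have hcases : ∀ x ∈ (Finset.range (i+1)).biUnion g,
            x ∈ N ∨ x ∈ (Finset.range i).biUnion g := by
          intro x hx
          rw [hUsucc, Finset.mem_union] at hx
          rcases hx with hx | hx
          · by_cases hxU : x ∈ (Finset.range i).biUnion g
            · right; exact hxU
            · left; rw [hN, Finset.mem_sdiff]; exact ⟨hx, hxU⟩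
          · right; exact hx
        refine ⟨φ', ?_, ?_, ?_, ?_⟩
        · intro _
          rw [hφ'old _ (hUsub i 0 hipos hp0)]
          exact hroot (by omega)
        · intro j hj x hxg hxp hxU
          by_cases h : j < i
          · rw [hφ'old _ (hUsub i j h hxg)]
            exact hcolor j h x hxg hxp hxU
          · have hji : i = j := by omega
            subst hji
            have hx : x ∈ N := by rw [hN, Finset.mem_sdiff]; exact ⟨hxg, hxU⟩
            exact hφ'col x hx
        · intro j hj
          by_cases h : j < i
          · have : (g j).image φ' = (g j).image φ := by
              apply Finset.image_congr
              intro x hx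
              exact hφ'old x (hUsub i j h hx)
            rw [this]
            exact hedges j h
          · have hji : i = j := by omega
            subst hji
            have hsplit : g i = insert (p i) N := by
              rw [hNeq, Finset.sdiff_singleton_eq_erase, Finset.insert_erase hpig]
            rw [hsplit, Finset.image_insert, hφ'old _ hpiU]
            have himg : N.image φ' = e \ {z} := by
              apply Finset.eq_of_subset_of_card_le
              · intro m hm
                obtain ⟨x, hx, rfl⟩ := Finset.mem_image.mp hm
                exact hφ'mem x hx
              · rw [← hcN, Finset.card_image_of_injOn]
                intro a ha b hb hab
                have ha' : a ∈ N := ha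
                have hb' : b ∈ N := hb
                simp only [hφ'] at hab
                rw [dif_pos ha', dif_pos hb'] at hab
                have := bij.injective (Subtype.val_injective hab)
                exact congrArg Subtype.val this
            rw [himg, ← hz, Finset.sdiff_singleton_eq_erase, Finset.insert_erase hze]
            exact heH
        · intro x hx y hy heq
          rcases hcases x hx with hxN | hxU <;> rcases hcases y hy with hyN | hyU
          · simp only [hφ'] at heq
            rw [dif_pos hxN, dif_pos hyN] at heq
            have := bij.injective (Subtype.val_injective heq)
            exact congrArg Subtype.val this
          · exfalso
            have h1 := hφ'col x hxN
            rw [hφ'old y hyU] at heq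
            have h2 := hγold y hyU
            rw [← heq] at h2
            omega
          · exfalso
            have h1 := hφ'col y hyN
            rw [hφ'old x hxU] at heq
            have h2 := hγold x hxU
            rw [heq] at h2
            omega
          · rw [hφ'old x hxU, hφ'old y hyU] at heq
            exact hinj x hxU y hyU heq
  obtain ⟨φ, _, hcolor, hedges, hinj⟩ := key t le_rfl
  exact ⟨φ, hinj, hedges⟩

end Embed


/-- Every `r`-uniform hypergraph with chromatic number greater than `t` contains a
copy of every `r`-uniform hypertree with `t` edges. -/
theorem stmt3 {V : Type*} [Fintype V] [DecidableEq V] (r t : ℕ) (hr : 2 ≤ r) (ht : 1 ≤ t)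
    (H : FinHypergraph V) (hH : H.Uniform r) (hchi : t < H.chromaticNumber)
    {W : Type*} [Fintype W] [DecidableEq W] (T : FinHypergraph W)
    (hT : T.IsHypertree) (hu : T.Uniform r) (hte : T.edges.card = t) :
    H.ContainsCopy T := by
  classical
  have hnp : ¬ ∃ c : V → Fin t, H.Proper c := by
    rintro ⟨c, hc⟩
    have hmem : t ∈ {k | ∃ c : V → Fin k, H.Proper c} := ⟨c, hc⟩
    have : H.chromaticNumber ≤ t := Nat.sInf_le hmem
    omega
  obtain ⟨γ, hpet, v, hv⟩ := exists_good_coloring r t hr H hH hnp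
  obtain ⟨g, p, hgT, hginj, hsurj, hp0, hatt⟩ := tree_enum T hT r t hr ht hu hte
  obtain ⟨φ, hinj, hedges⟩ := embed_tree r t hr ht H hH γ hpet v hv T hu g p hgT hp0 hatt
  have hcover : ∀ w : W, w ∈ (Finset.range t).biUnion g := by
    intro w
    have hwe : ∃ e ∈ T.edges, w ∈ e := by
      obtain ⟨e₀, he₀⟩ : T.edges.Nonempty := Finset.card_pos.mp (by omega)
      obtain ⟨y, hy⟩ : e₀.Nonempty := Finset.card_pos.mp (by rw [hu e₀ he₀]; omega)
      rcases Relation.ReflTransGen.cases_head (hT.1 w y) with heq | ⟨z, hadj, _⟩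
      · exact ⟨e₀, he₀, by rw [heq]; exact hy⟩
      · obtain ⟨e, he, hwe, _⟩ := hadj
        exact ⟨e, he, hwe⟩
    obtain ⟨e, he, hwe⟩ := hwe
    obtain ⟨j, hj, rfl⟩ := hsurj e he
    exact Finset.mem_biUnion.mpr ⟨j, Finset.mem_range.mpr hj, hwe⟩
  refine ⟨φ, fun x y hxy => hinj x (hcover x) y (hcover y) hxy, ?_⟩
  intro e he
  obtain ⟨j, hj, rfl⟩ := hsurj e he
  exact hedges j hj
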